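/- Let ũ ∈ Ũ₀ contain at least one position of type v, and suppose some separating composition of ũ has a part equal to 1. Then for every partition λ (a composition with weakly decreasing parts), the sum Σ_μ φ_ũ(μ), taken over all distinct compositions μ obtained by permuting the parts of λ, equals either 0 or +∞. -/

import Mathlib

open scoped ENNReal NNReal

namespace GK

/-! ## The Gnedin–Kingman graph -/

/-- Decrement (if the part is ≥ 2) or delete (otherwise) the part of `μ` at position `p`. -/
def stepAt (μ : List ℕ) (p : ℕ) : List ℕ :=
  if 2 ≤ μ.getD p 0 then μ.set p (μ.getD p 0 - 1) else μ.eraseIdx p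

/-- Edge multiplicity `κ(ν,μ)` of the Gnedin–Kingman graph: the number of positions of `μ`
at which decrementing a part ≥ 2 (or deleting a part equal to 1) produces `ν`. -/
def kappa (ν μ : List ℕ) : ℕ :=
  ((Finset.range μ.length).filter fun p => stepAt μ p = ν).card

/-- `ν ↗ μ`. -/
def Rel (ν μ : List ℕ) : Prop := 0 < kappa ν μ

def IsComposition (l : List ℕ) : Prop := ∀ n ∈ l, 0 < n

/-- Compositions: finite lists of positive integers. -/
abbrev Comp := {l : List ℕ // IsComposition l}

/-- The empty composition ∅. -/
def cEmpty : Comp := ⟨[], fun _ h => nomatch h⟩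

/-- Harmonicity, for `[0,∞]`-valued functions on the Gnedin–Kingman graph
(with the conventions `0·∞ = 0` and `x + ∞ = ∞` of `ℝ≥0∞`). -/
def HarmonicE (φ : Comp → ℝ≥0∞) : Prop :=
  ∀ l : Comp, φ l = ∑' μ : Comp, (kappa l.1 μ.1 : ℝ≥0∞) * φ μ

/-- Harmonicity, for real-valued functions. -/
def HarmonicR (φ : Comp → ℝ) : Prop :=
  ∀ l : Comp, φ l = ∑' μ : Comp, (kappa l.1 μ.1 : ℝ) * φ μ

/-- A finite harmonic function: real-valued (hence finite), nonnegative, harmonic. -/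
def FiniteHarmonic (φ : Comp → ℝ) : Prop :=
  HarmonicR φ ∧ ∀ l, 0 ≤ φ l

/-- The quasi-shuffle coefficient `c^γ_{α,β}`: the number of pairs of strictly increasing
maps `f, g` into the positions of `γ` which jointly cover all positions of `γ` and such that
each part of `γ` is the sum of the corresponding parts of `α` and `β`. -/
noncomputable def qsCoeff (α β γ : List ℕ) : ℕ :=
  Nat.card {fg : (Fin α.length → Fin γ.length) × (Fin β.length → Fin γ.length) //
    StrictMono fg.1 ∧ StrictMono fg.2 ∧
    (∀ s, (∃ i, fg.1 i = s) ∨ (∃ j, fg.2 j = s)) ∧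
    ∀ s : Fin γ.length,
      γ.get s = (∑ i, if fg.1 i = s then α.get i else 0) +
                (∑ j, if fg.2 j = s then β.get j else 0)}

/-- Indecomposability of a finite harmonic function normalized at ∅. -/
def IndecFin (φ : Comp → ℝ) : Prop :=
  ∀ φ₁ φ₂ : Comp → ℝ, FiniteHarmonic φ₁ → FiniteHarmonic φ₂ →
    φ₁ cEmpty = 1 → φ₂ cEmpty = 1 →
    ∀ c₁ c₂ : ℝ, 0 < c₁ → 0 < c₂ → c₁ + c₂ = 1 →
      (∀ l, φ l = c₁ * φ₁ l + c₂ * φ₂ l) → φ = φ₁ ∨ φ = φ₂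

/-! ## Typed weight sequences, `M°_λ` and `U₀` -/

/-- `M°_λ(v)` for a typed weight sequence `v` (`true` = h, `false` = v): the sum over all
decompositions of `λ` into consecutive (possibly empty) blocks, one for each entry of `v`,
where an h-block has at most one part and contributes `w^{|block|}`, and a v-block has all
parts equal to 1 and contributes `w^{ℓ}/ℓ!`. -/
noncomputable def Mcirc : List (ℝ × Bool) → List ℕ → ℝ
  | [], l => if l = [] then 1 else 0
  | (w, t) :: v, l =>
      ∑ i ∈ Finset.range (l.length + 1),
        (if t then (if (l.take i).length ≤ 1 then w ^ (l.take i).sum else 0)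
         else if ∀ n ∈ l.take i, n = 1 then
           w ^ (l.take i).length / ((l.take i).length.factorial : ℝ)
         else 0) * Mcirc v (l.drop i)

/-- Membership in `U₀`: positive weights of total sum 1, no two consecutive v's. -/
def memU0 (u : List (ℝ × Bool)) : Prop :=
  (∀ p ∈ u, 0 < p.1) ∧ (u.map Prod.fst).sum = 1 ∧
    List.Chain' (fun p q => p.2 = true ∨ q.2 = true) u

/-- `t_n(u)`: replace each h-interval by a part `n` and each v-interval by `n` ones. -/
def tnU (u : List (ℝ × Bool)) (n : ℕ) : List ℕ :=
  (u.map fun p => if p.2 then [n] else List.replicate n 1).flatten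

/-- Merge each maximal run of consecutive v-intervals into a single v-interval,
summing the weights. -/
def mergeV : List (ℝ × Bool) → List (ℝ × Bool)
  | [] => []
  | (w, true) :: rest => (w, true) :: mergeV rest
  | (w, false) :: rest =>
      match mergeV rest with
      | (w', false) :: rest' => (w + w', false) :: rest'
      | r => (w, false) :: r

/-! ## The set `Ũ₀` and the functions `φ_ũ` -/

/-- An element of `Ũ₀`. `t i = true` means type h, `false` means type v; `sep i` are the
separating compositions λ₀, …, λ_m. Only `w i`, `t i` for `i < m` and `sep i` for `i ≤ m`
are relevant. -/
structure UTilde where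
  m : ℕ
  w : ℕ → ℝ
  t : ℕ → Bool
  sep : ℕ → List ℕ
  sep_pos : ∀ i, i ≤ m → ∀ n ∈ sep i, 0 < n
  sep_nonempty : ∃ i, i ≤ m ∧ sep i ≠ []
  w_pos : ∀ i, i < m → 0 < w i
  w_sum : ∑ i ∈ Finset.range m, w i = 1
  vv : ∀ i, i + 1 < m → t i = false → t (i + 1) = false → sep (i + 1) ≠ []
  v_left : ∀ i, i < m → t i = false → sep i ≠ [] → 2 ≤ (sep i).getLastD 0
  v_right : ∀ i, i < m → t i = false → sep (i + 1) ≠ [] → 2 ≤ (sep (i + 1)).headD 0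

namespace UTilde

variable (u : UTilde)

/-- `λ₀ ⊔ f 0 ⊔ λ₁ ⊔ … ⊔ f (m-1) ⊔ λ_m`. -/
def blocks (f : ℕ → List ℕ) : List ℕ :=
  u.sep 0 ++ (List.ofFn fun i : Fin u.m => f (i : ℕ) ++ u.sep ((i : ℕ) + 1)).flatten

/-- `t_n(ũ)`. -/
def tn (n : ℕ) : List ℕ :=
  u.blocks fun i => if u.t i then [n] else List.replicate n 1

/-- Membership in `GK_ũ`. -/
def GKmem (l : List ℕ) : Prop := ∃ n, 1 ≤ n ∧ Relation.ReflTransGen Rel l (u.tn n)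

/-- Position `i` (of type h) is adjacent to a v-interval. -/
def adj (i : ℕ) : Prop :=
  (0 < i ∧ u.t (i - 1) = false ∧ u.sep i = []) ∨
  (i + 1 < u.m ∧ u.t (i + 1) = false ∧ u.sep (i + 1) = [])

instance (i : ℕ) : Decidable (u.adj i) := by unfold adj; infer_instance

def d (i : ℕ) : ℕ := if u.adj i then 2 else 1

/-- `λ(a,b)`, where `c` encodes both vectors: `a i = c i` on h-positions and
`b i = c i` on v-positions. -/
def lam (c : ℕ → ℕ) : List ℕ :=
  u.blocks fun i => if u.t i then [u.d i + c i] else List.replicate (c i) 1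

/-- `λ_ũ = λ(0,0)`. -/
def lam0 : List ℕ := u.lam fun _ => 0

/-- `Π_{i : t_i = h} w_i^{a_i} · Π_{i : t_i = v} w_i^{b_i}/b_i!`. -/
noncomputable def phiVal (c : ℕ → ℕ) : ℝ≥0∞ :=
  ∏ i ∈ Finset.range u.m,
    if u.t i then ENNReal.ofReal (u.w i) ^ c i
    else ENNReal.ofReal (u.w i) ^ c i / ((c i).factorial : ℝ≥0∞)

open Classical in
/-- The semifinite harmonic function `φ_ũ`. -/
noncomputable def phi (l : List ℕ) : ℝ≥0∞ :=
  if h : ∃ c : ℕ → ℕ, l = u.lam c then u.phiVal h.choose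
  else if u.GKmem l then ⊤ else 0

/-- `u^ε(ũ)`: each part of each separating composition is replaced by an h-interval
of length `ε`. -/
def uEps (ε : ℝ) : List (ℝ × Bool) :=
  ((u.sep 0).map fun _ => (ε, true)) ++
    (List.ofFn fun i : Fin u.m =>
      (u.w (i : ℕ), u.t (i : ℕ)) :: ((u.sep ((i : ℕ) + 1)).map fun _ => (ε, true))).flatten

/-- `n(ũ) = |λ₀| + … + |λ_m|`. -/
def nU : ℕ := ∑ i ∈ Finset.range (u.m + 1), (u.sep i).sum

/-- The list of intervals of `ũ` (separating compositions dropped). -/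
def ubarList : List (ℝ × Bool) := List.ofFn fun i : Fin u.m => (u.w (i : ℕ), u.t (i : ℕ))

end UTilde

/-! ## The cone `K` and the maps `F_φ` -/

/-- `V`: finitely supported real functions on compositions. -/
abbrev V := Comp →₀ ℝ

/-- `W`: span of the vectors `e_λ − Σ_μ κ(λ,μ)·e_μ`. -/
noncomputable def Wsub : Submodule ℝ V :=
  Submodule.span ℝ
    {x : V | ∃ l : Comp, ∀ μ : Comp, x μ = (if μ = l then 1 else 0) - (kappa l.1 μ.1 : ℝ)}

/-- `R = V/W`. -/
abbrev Rq := V ⧸ Wsub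

/-- The cone `K ⊆ R`: classes of nonnegative vectors. -/
def Kcone : Set Rq :=
  {a | ∃ x : V, (∀ μ, 0 ≤ x μ) ∧ Submodule.Quotient.mk x = a}

/-- `Σ_λ x(λ)·φ(λ)` for a representative `x`. -/
noncomputable def FphiV (φ : Comp → ℝ≥0∞) (x : V) : ℝ≥0∞ :=
  ∑' μ : Comp, ENNReal.ofReal (x μ) * φ μ

open Classical in
/-- `F_φ : K → [0,∞]` (defined via a choice of nonnegative representative; for harmonic `φ`
it is well defined). Outside `K` we set it to `0`. -/
noncomputable def Fphi (φ : Comp → ℝ≥0∞) (a : Rq) : ℝ≥0∞ :=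
  if h : a ∈ Kcone then FphiV φ h.choose else 0

/-- Semifiniteness: not finite, and `F_φ` is determined by its finite values from below. -/
def Semifinite (φ : Comp → ℝ≥0∞) : Prop :=
  (¬ ∀ l, φ l < ⊤) ∧
    ∀ a ∈ Kcone, Fphi φ a =
      sSup {y | ∃ b ∈ Kcone, a - b ∈ Kcone ∧ Fphi φ b < ⊤ ∧ y = Fphi φ b}

/-- Indecomposability of a semifinite harmonic function. -/
def IndecSemifinite (φ : Comp → ℝ≥0∞) : Prop :=
  ∀ ψ : Comp → ℝ≥0∞, HarmonicE ψ →
    (((∀ l, ψ l < ⊤) ∧ ψ ≠ 0) ∨ Semifinite ψ) →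
    (∀ a ∈ Kcone, Fphi ψ a ≤ Fphi φ a) →
    ∃ c : ℝ≥0, ∀ l, ψ l = (c : ℝ≥0∞) * φ l

end GK


namespace GKAux

/-! ### chunks -/

def chunks {α : Type*} : ℕ → (ℕ → List α) → List α
  | 0, _ => []
  | n+1, g => g 0 ++ chunks n (fun k => g (k+1))

lemma chunks_eq_ofFn {α : Type*} : ∀ (n : ℕ) (g : ℕ → List α),
    (List.ofFn fun i : Fin n => g (i : ℕ)).flatten = chunks n g := by
  intro n
  induction n with
  | zero => intro g; simp [chunks]
  | succ n ih =>
    intro g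
    rw [List.ofFn_succ, List.flatten_cons, chunks]
    simp only [Fin.val_succ, Fin.val_zero]
    rw [ih (fun k => g (k+1))]

lemma chunks_congr {α : Type*} : ∀ (n : ℕ) (g g' : ℕ → List α),
    (∀ i < n, g i = g' i) → chunks n g = chunks n g' := by
  intro n
  induction n with
  | zero => intro g g' _; rfl
  | succ n ih =>
    intro g g' h
    rw [chunks, chunks, h 0 (Nat.succ_pos n), ih _ _ (fun i hi => h (i+1) (by omega))]

lemma chunks_add {α : Type*} : ∀ (a : ℕ) (b : ℕ) (g : ℕ → List α),
    chunks (a + b) g = chunks a g ++ chunks b (fun k => g (a + k)) := by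
  intro a
  induction a with
  | zero => intro b g; simp [chunks]
  | succ a ih =>
    intro b g
    have : a + 1 + b = (a + b) + 1 := by omega
    rw [this, chunks, chunks, ih b (fun k => g (k+1)), List.append_assoc]
    have : (fun k => g (a + k + 1)) = fun k => g (a + 1 + k) := by funext k; congr 1; omega
    rw [this]

lemma chunks_split {α : Type*} (n i : ℕ) (hi : i < n) (g : ℕ → List α) :
    chunks n g = chunks i g ++ g i ++ chunks (n - i - 1) (fun k => g (i + 1 + k)) := by
  have h1 : n = i + (n - i) := by omega
  rw [h1, chunks_add]
  have h2 : n - i = (n - i - 1) + 1 := by omega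
  rw [h2, chunks]
  simp only [Nat.add_zero, List.append_assoc]
  have h3 : i + (n - i - 1 + 1) - i - 1 = n - i - 1 := by omega
  rw [h3]
  have : (fun k => g (i + (k + 1))) = fun k => g (i + 1 + k) := by funext k; congr 1; omega
  rw [this]

lemma mem_chunks {α : Type*} : ∀ (n : ℕ) (g : ℕ → List α) (x : α),
    x ∈ chunks n g → ∃ k < n, x ∈ g k := by
  intro n
  induction n with
  | zero => intro g x h; simp [chunks] at h
  | succ n ih =>
    intro g x h
    rw [chunks, List.mem_append] at h
    rcases h with h | h
    · exact ⟨0, Nat.succ_pos n, h⟩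
    · obtain ⟨k, hk, hm⟩ := ih _ _ h
      exact ⟨k+1, by omega, hm⟩

lemma forall₂_chunks {α : Type*} (r : α → α → Prop) : ∀ (n : ℕ) (g h : ℕ → List α),
    (∀ k < n, List.Forall₂ r (g k) (h k)) → List.Forall₂ r (chunks n g) (chunks n h) := by
  intro n
  induction n with
  | zero => intro g h _; exact List.Forall₂.nil
  | succ n ih =>
    intro g h hk
    exact List.rel_append (hk 0 (Nat.succ_pos n))
      (ih _ _ (fun k hkk => hk (k+1) (by omega)))

lemma sublist_chunks {α : Type*} : ∀ (n : ℕ) (g h : ℕ → List α),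
    (∀ k < n, (g k).Sublist (h k)) → (chunks n g).Sublist (chunks n h) := by
  intro n
  induction n with
  | zero => intro g h _; exact List.Sublist.refl _
  | succ n ih =>
    intro g h hk
    exact List.Sublist.append (hk 0 (Nat.succ_pos n))
      (ih _ _ (fun k hkk => hk (k+1) (by omega)))

end GKAux
namespace GKAux

/-! ### Tokens and parsing -/

inductive Tok where
  | F (z : ℕ) : Tok
  | H (d : ℕ) : Tok
  | V : Tok

open Tok

def Parses : List Tok → List ℕ → Prop
  | [], l => l = []
  | F z :: S, l => ∃ l', l = z :: l' ∧ Parses S l'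
  | H d :: S, l => ∃ a l', l = (d + a) :: l' ∧ Parses S l'
  | V :: S, l => ∃ b l', l = List.replicate b 1 ++ l' ∧ Parses S l'

lemma parses_append : ∀ {S₁ S₂ : List Tok} {l₁ l₂ : List ℕ},
    Parses S₁ l₁ → Parses S₂ l₂ → Parses (S₁ ++ S₂) (l₁ ++ l₂) := by
  intro S₁
  induction S₁ with
  | nil => intro S₂ l₁ l₂ h1 h2; rw [Parses] at h1; subst h1; simpa
  | cons t S ih =>
    intro S₂ l₁ l₂ h1 h2
    cases t with
    | F z =>
      obtain ⟨l', rfl, hp⟩ := h1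
      exact ⟨l' ++ l₂, rfl, ih hp h2⟩
    | H d =>
      obtain ⟨a, l', rfl, hp⟩ := h1
      exact ⟨a, l' ++ l₂, rfl, ih hp h2⟩
    | V =>
      obtain ⟨b, l', rfl, hp⟩ := h1
      exact ⟨b, l' ++ l₂, by rw [List.append_assoc], ih hp h2⟩

lemma parses_chunks : ∀ (n : ℕ) (g : ℕ → List Tok) (h : ℕ → List ℕ),
    (∀ k < n, Parses (g k) (h k)) → Parses (chunks n g) (chunks n h) := by
  intro n
  induction n with
  | zero => intro g h _; rw [chunks, chunks]; rfl
  | succ n ih =>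
    intro g h hk
    exact parses_append (hk 0 (Nat.succ_pos n)) (ih _ _ fun k hkk => hk (k+1) (by omega))

lemma parses_tokF : ∀ (s : List ℕ), Parses (s.map F) s := by
  intro s
  induction s with
  | nil => rfl
  | cons x s ih => exact ⟨s, rfl, ih⟩

/-! ### Structure predicates -/

def Hd2x : List Tok → Prop
  | F z :: _ => 2 ≤ z
  | H d :: _ => 2 ≤ d
  | _ => False

def Safe : List Tok → Prop
  | [] => True
  | F z :: S => 2 ≤ z ∨ Safe S
  | H d :: S => 2 ≤ d ∨ Safe S
  | V :: _ => False

def WF : List Tok → Prop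
  | [] => True
  | F _ :: S => WF S
  | H d :: S => (d ≤ 1 → Safe S) ∧ WF S
  | V :: S => WF S

def VOK : List Tok → Prop
  | [] => True
  | V :: S => Hd2x S ∧ VOK S
  | _ :: S => VOK S

lemma safe_tokF_of_safe : ∀ (s : List ℕ) (T : List Tok), Safe T → Safe (s.map F ++ T) := by
  intro s
  induction s with
  | nil => intro T h; exact h
  | cons x s ih => intro T h; exact Or.inr (ih T h)

lemma safe_tokF_of_mem : ∀ (s : List ℕ) (T : List Tok), (∃ x ∈ s, 2 ≤ x) →
    Safe (s.map F ++ T) := by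
  intro s
  induction s with
  | nil => intro T h; simp at h
  | cons y s ih =>
    intro T h
    obtain ⟨x, hx, h2⟩ := h
    rcases List.mem_cons.mp hx with rfl | hx
    · exact Or.inl h2
    · exact Or.inr (ih T ⟨x, hx, h2⟩)

lemma wf_tokF : ∀ (s : List ℕ) (T : List Tok), WF T → WF (s.map F ++ T) := by
  intro s
  induction s with
  | nil => intro T h; exact h
  | cons x s ih => intro T h; exact ih T h

lemma vok_tokF : ∀ (s : List ℕ) (T : List Tok), VOK T → VOK (s.map F ++ T) := by
  intro s
  induction s with
  | nil => intro T h; exact h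
  | cons x s ih => intro T h; exact ih T h

lemma hd2x_parses : ∀ (S T : List Tok) (l : List ℕ), Hd2x S → Parses (S ++ T) l →
    ∃ y l', l = y :: l' ∧ 2 ≤ y := by
  intro S T l h2 hp
  match S, h2 with
  | F z :: S, h2 =>
    obtain ⟨l', rfl, _⟩ := hp
    exact ⟨z, l', rfl, h2⟩
  | H d :: S, h2 =>
    obtain ⟨a, l', rfl, _⟩ := hp
    exact ⟨d + a, l', rfl, by have h3 : 2 ≤ d := h2; omega⟩

/-- two representations as ones-run followed by something ≥ 2 (or the end) agree -/
lemma ones_run_unique : ∀ (b₁ b₂ : ℕ) (r₁ r₂ : List ℕ),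
    List.replicate b₁ 1 ++ r₁ = List.replicate b₂ 1 ++ r₂ →
    (∀ y l', r₁ = y :: l' → 2 ≤ y) → (∀ y l', r₂ = y :: l' → 2 ≤ y) →
    b₁ = b₂ ∧ r₁ = r₂ := by
  intro b₁
  induction b₁ with
  | zero =>
    intro b₂ r₁ r₂ heq h1 h2
    cases b₂ with
    | zero => simpa using heq
    | succ b₂ =>
      simp only [List.replicate, List.nil_append, List.cons_append] at heq
      cases r₁ with
      | nil => simp at heq
      | cons y l' =>
        rw [List.cons_eq_cons] at heq
        have := h1 y l' rfl
        omega
  | succ b₁ ih =>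
    intro b₂ r₁ r₂ heq h1 h2
    cases b₂ with
    | zero =>
      simp only [List.replicate, List.nil_append, List.cons_append] at heq
      cases r₂ with
      | nil => simp at heq
      | cons y l' =>
        rw [List.cons_eq_cons] at heq
        have := h2 y l' rfl
        omega
    | succ b₂ =>
      simp only [List.replicate, List.cons_append, List.cons_eq_cons] at heq
      obtain ⟨b_eq, r_eq⟩ := ih b₂ r₁ r₂ heq.2 h1 h2
      exact ⟨by omega, r_eq⟩

end GKAux
namespace GKAux

open Tok

lemma lemF : ∀ (S : List Tok), WF S → ∀ (P X : List ℕ), P ≠ [] →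
    ((∃ x ∈ P, 2 ≤ x) ∨ Safe S) → Parses S X → Parses S (P ++ X) → False := by
  intro S
  induction S with
  | nil =>
    intro _ P X hP _ _ hR
    rw [Parses] at hR
    exact hP (List.append_eq_nil_iff.mp hR).1
  | cons t S ih =>
    intro hwf P X hP hinv hL hR
    cases t with
    | F z =>
      obtain ⟨X₁, rfl, hL₁⟩ := hL
      obtain ⟨Y, hY, hR₁⟩ := hR
      obtain ⟨p, P₂, rfl⟩ := List.exists_cons_of_ne_nil hP
      rw [List.cons_append, List.cons_eq_cons] at hY
      obtain ⟨rfl, rfl⟩ := hY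
      refine ih hwf (P₂ ++ [p]) X₁ (by simp) ?_ hL₁ ?_
      · rcases hinv with ⟨x, hx, h2⟩ | hsafe
        · rcases List.mem_cons.mp hx with rfl | hx
          · exact Or.inl ⟨x, by simp, h2⟩
          · exact Or.inl ⟨x, by simp [hx], h2⟩
        · rcases hsafe with h2 | hs
          · exact Or.inl ⟨p, by simp, h2⟩
          · exact Or.inr hs
      · simpa [List.append_assoc] using hR₁
    | H d =>
      obtain ⟨a, X₁, rfl, hL₁⟩ := hL
      obtain ⟨a', Y, hY, hR₁⟩ := hR
      obtain ⟨p, P₂, rfl⟩ := List.exists_cons_of_ne_nil hP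
      rw [List.cons_append, List.cons_eq_cons] at hY
      obtain ⟨hpd, rfl⟩ := hY
      obtain ⟨hwf1, hwf2⟩ := hwf
      refine ih hwf2 (P₂ ++ [d + a]) X₁ (by simp) ?_ hL₁ ?_
      · rcases hinv with ⟨x, hx, h2⟩ | hsafe
        · rcases List.mem_cons.mp hx with rfl | hx
          · -- x = p = d + a'; if d ≥ 2 new element works, else Safe S from WF
            by_cases hd : d ≤ 1
            · exact Or.inr (hwf1 hd)
            · exact Or.inl ⟨d + a, by simp, by omega⟩
          · exact Or.inl ⟨x, by simp [hx], h2⟩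
        · rcases hsafe with h2 | hs
          · exact Or.inl ⟨d + a, by simp, by omega⟩
          · exact Or.inr hs
      · simpa [List.append_assoc] using hR₁
    | V =>
      obtain ⟨b, X₁, rfl, hL₁⟩ := hL
      obtain ⟨b', Y, hY, hR₁⟩ := hR
      have hinv' : ∃ x ∈ P, 2 ≤ x := by
        rcases hinv with h | h
        · exact h
        · exact absurd h (by rw [Safe]; exact not_false)
      obtain ⟨x, hx, h2⟩ := hinv'
      obtain ⟨s, hs, rfl⟩ := List.mem_iff_getElem.mp hx
      -- b' ≤ s
      have hb's : b' ≤ s := by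
        by_contra hcon
        push_neg at hcon
        have hlen : s < (P ++ (List.replicate b 1 ++ X₁)).length := by
          simp only [List.length_append]; omega
        have e1 : (P ++ (List.replicate b 1 ++ X₁))[s] = P[s] :=
          List.getElem_append_left hs
        have hlen2 : s < (List.replicate b' (1:ℕ)).length := by
          simp only [List.length_replicate]; omega
        have e2 : (List.replicate b' (1:ℕ) ++ Y)[s]'(by rw [← hY]; exact hlen) = 1 := by
          rw [List.getElem_append_left hlen2, List.getElem_replicate]
        have e3 := List.getElem_of_eq hY hlen
        rw [e1] at e3
        have e4 : P[s] = 1 := e3.trans e2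
        omega
      have hb'P : b' ≤ P.length := by omega
      -- split P
      have hsplit : P.take b' ++ (P.drop b' ++ (List.replicate b 1 ++ X₁)) =
          List.replicate b' 1 ++ Y := by
        rw [← List.append_assoc, List.take_append_drop]; exact hY
      have hlen3 : (P.take b').length = (List.replicate b' (1:ℕ)).length := by
        simp [List.length_take, hb'P]
      obtain ⟨-, hYeq⟩ := List.append_inj hsplit (by simpa using hlen3)
      refine ih hwf (P.drop b' ++ List.replicate b 1) X₁ ?_ ?_ hL₁ ?_
      · have : (P.drop b').length = P.length - b' := List.length_drop ..
        intro hcon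
        have h5 := (List.append_eq_nil_iff.mp hcon).1
        have hlen4 : (P.drop b').length = 0 := by rw [h5]; rfl
        omega
      · refine Or.inl ⟨P[s], ?_, h2⟩
        apply List.mem_append.mpr
        left
        rw [List.mem_iff_getElem]
        refine ⟨s - b', ?_, ?_⟩
        · rw [List.length_drop]; omega
        · rw [List.getElem_drop]
          congr 1
          omega
      · rw [← hYeq] at hR₁
        simpa [List.append_assoc] using hR₁

lemma sync : ∀ (S C : List Tok) (X : List ℕ), VOK S →
    Parses (S ++ (F 1 :: C)) X → Parses (S ++ C) X →
    ∃ X', Parses C X' ∧ Parses C (1 :: X') := by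
  intro S
  induction S with
  | nil =>
    intro C X _ hL hR
    obtain ⟨X₁, rfl, hP₁⟩ := hL
    exact ⟨X₁, hP₁, hR⟩
  | cons t S ih =>
    intro C X hvok hL hR
    cases t with
    | F z =>
      obtain ⟨X₁, rfl, hL₁⟩ := hL
      obtain ⟨X₂, hX₂, hR₁⟩ := hR
      rw [List.cons_eq_cons] at hX₂
      obtain ⟨-, rfl⟩ := hX₂
      exact ih C _ hvok hL₁ hR₁
    | H d =>
      obtain ⟨a, X₁, rfl, hL₁⟩ := hL
      obtain ⟨a', X₂, hX₂, hR₁⟩ := hR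
      rw [List.cons_eq_cons] at hX₂
      obtain ⟨-, rfl⟩ := hX₂
      exact ih C _ hvok hL₁ hR₁
    | V =>
      obtain ⟨h2, hvok'⟩ := hvok
      obtain ⟨b₁, X₁, rfl, hL₁⟩ := hL
      obtain ⟨b₂, X₂, hX₂, hR₁⟩ := hR
      obtain ⟨y₁, l₁, hXe₁, hy₁⟩ := hd2x_parses S _ X₁ h2 hL₁
      obtain ⟨y₂, l₂, hXe₂, hy₂⟩ := hd2x_parses S _ X₂ h2 hR₁
      obtain ⟨-, heq⟩ := ones_run_unique b₁ b₂ X₁ X₂ hX₂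
        (fun y l' hyl => by rw [hyl] at hXe₁; rw [List.cons_eq_cons] at hXe₁; omega)
        (fun y l' hyl => by rw [hyl] at hXe₂; rw [List.cons_eq_cons] at hXe₂; omega)
      rw [← heq] at hR₁
      exact ih C _ hvok' hL₁ hR₁

lemma noparse (S C : List Tok) (X : List ℕ) (hS : VOK S) (hC : WF C) (hsafe : Safe C)
    (hL : Parses (S ++ (F 1 :: C)) X) (hR : Parses (S ++ C) X) : False := by
  obtain ⟨X', h1, h2⟩ := sync S C X hS hL hR
  exact lemF C hC [1] X' (by simp) (Or.inr hsafe) h1 (by simpa using h2)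

end GKAux
namespace GK

/-! ### Single-step and chain lemmas for the GK graph -/

lemma rel_of_stepAt (μ : List ℕ) (p : ℕ) (hp : p < μ.length) {ν : List ℕ}
    (h : stepAt μ p = ν) : Rel ν μ := by
  rw [Rel, kappa, Finset.card_pos]
  exact ⟨p, Finset.mem_filter.mpr ⟨Finset.mem_range.mpr hp, h⟩⟩

lemma rel_set (μ : List ℕ) (p : ℕ) (hp : p < μ.length) (h2 : 2 ≤ μ[p]) :
    Rel (μ.set p (μ[p] - 1)) μ := by
  apply rel_of_stepAt μ p hp
  rw [stepAt, List.getD_eq_getElem μ 0 hp, if_pos h2]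

lemma rel_erase (μ : List ℕ) (p : ℕ) (hp : p < μ.length) (h1 : μ[p] = 1) :
    Rel (μ.eraseIdx p) μ := by
  apply rel_of_stepAt μ p hp
  rw [stepAt, List.getD_eq_getElem μ 0 hp, h1, if_neg (by omega)]

lemma rtg_head (k a : ℕ) (l : List ℕ) (ha : 1 ≤ a) :
    Relation.ReflTransGen Rel (a :: l) ((a + k) :: l) := by
  induction k with
  | zero => exact Relation.ReflTransGen.refl
  | succ k ih =>
    refine Relation.ReflTransGen.tail ih ?_
    have hrel := rel_set ((a + (k+1)) :: l) 0 (by simp) (by simp; omega)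
    simpa using hrel

lemma stepAt_cons (b : ℕ) (y : List ℕ) (p : ℕ) :
    stepAt (b :: y) (p + 1) = b :: stepAt y p := by
  rw [stepAt, stepAt, List.getD_cons_succ]
  split
  · rfl
  · rfl

lemma rel_cons (b : ℕ) {x y : List ℕ} (h : Rel x y) : Rel (b :: x) (b :: y) := by
  rw [Rel, kappa, Finset.card_pos] at h
  obtain ⟨p, hp⟩ := h
  rw [Finset.mem_filter, Finset.mem_range] at hp
  apply rel_of_stepAt (b :: y) (p + 1) (by simp; omega)
  rw [stepAt_cons, hp.2]

lemma rtg_cons (b : ℕ) {x y : List ℕ} (h : Relation.ReflTransGen Rel x y) :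
    Relation.ReflTransGen Rel (b :: x) (b :: y) := by
  induction h with
  | refl => exact Relation.ReflTransGen.refl
  | tail _ hstep ih => exact Relation.ReflTransGen.tail ih (rel_cons b hstep)

lemma rtg_grow (a : ℕ) (l : List ℕ) (ha : 1 ≤ a) :
    Relation.ReflTransGen Rel l (a :: l) := by
  have h1 : Rel l (1 :: l) := by
    have := rel_erase (1 :: l) 0 (by simp) (by simp)
    simpa using this
  have h2 : Relation.ReflTransGen Rel (1 :: l) ((1 + (a - 1)) :: l) :=
    rtg_head (a - 1) 1 l le_rfl
  have ha' : 1 + (a - 1) = a := by omega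
  rw [ha'] at h2
  exact Relation.ReflTransGen.trans (Relation.ReflTransGen.single h1) h2

lemma rtg_of_sublist : ∀ {σ μ : List ℕ}, σ.Sublist μ → ∀ {ν : List ℕ},
    List.Forall₂ (· ≤ ·) ν σ → (∀ x ∈ ν, 1 ≤ x) → (∀ x ∈ μ, 1 ≤ x) →
    Relation.ReflTransGen Rel ν μ := by
  intro σ μ h
  induction h with
  | slnil =>
    intro ν hf _ _
    rw [List.forall₂_nil_right_iff] at hf
    subst hf
    exact Relation.ReflTransGen.refl
  | cons a hsub ih =>
    intro ν hf hν hμ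
    refine Relation.ReflTransGen.trans (ih hf hν fun x hx => hμ x (List.mem_cons_of_mem a hx)) ?_
    exact rtg_grow a _ (hμ a List.mem_cons_self)
  | @cons_cons l₁ l₂ a hsub ih =>
    intro ν hf hν hμ
    rcases hf with _ | ⟨hba, hf'⟩
    rename_i b ν'
    have h1 : Relation.ReflTransGen Rel ν' _ :=
      ih hf' (fun x hx => hν x (List.mem_cons_of_mem b hx)) (fun x hx => hμ x (List.mem_cons_of_mem a hx))
    have hb1 : 1 ≤ b := hν b List.mem_cons_self
    refine Relation.ReflTransGen.trans (rtg_cons b h1) ?_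
    have h2 := rtg_head (a - b) b l₂ hb1
    have hab : b + (a - b) = a := by omega
    rwa [hab] at h2

end GK
namespace GK

open GKAux (chunks Tok Parses Hd2x Safe WF VOK)

/-! ### Tokenization of `UTilde` -/

def tokF (s : List ℕ) : List Tok := s.map Tok.F

def slotT (u : UTilde) (k : ℕ) : List Tok :=
  if u.t k then [Tok.H (u.d k)] else [Tok.V]

def slotB (u : UTilde) (c : ℕ → ℕ) (k : ℕ) : List ℕ :=
  if u.t k then [u.d k + c k] else List.replicate (c k) 1

def spT (u : UTilde) (k : ℕ) : List Tok := if k = 0 then [] else slotT u (k-1)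

def spB (u : UTilde) (c : ℕ → ℕ) (k : ℕ) : List ℕ :=
  if k = 0 then [] else slotB u c (k-1)

def gTe (u : UTilde) (k : ℕ) : List Tok := spT u k ++ tokF (u.sep k)

def toksU (u : UTilde) : List Tok := chunks (u.m + 1) (gTe u)

def gT (u : UTilde) (k : ℕ) : List Tok := slotT u k ++ tokF (u.sep (k+1))

def Ctail (u : UTilde) (i : ℕ) : List Tok := chunks (u.m - i) (fun t => gT u (i + t))

lemma d_pos (u : UTilde) (i : ℕ) : 1 ≤ u.d i := by
  rw [UTilde.d]; split <;> omega

lemma d_le_two (u : UTilde) (i : ℕ) : u.d i ≤ 2 := by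
  rw [UTilde.d]; split <;> omega

lemma d_eq_two_of_adj (u : UTilde) (i : ℕ) (h : u.adj i) : u.d i = 2 := by
  rw [UTilde.d, if_pos h]

lemma adj_of_right (u : UTilde) (i : ℕ) (h1 : i + 1 < u.m) (h2 : u.t (i+1) = false)
    (h3 : u.sep (i+1) = []) : u.adj i := Or.inr ⟨h1, h2, h3⟩

lemma adj_of_left (u : UTilde) (i : ℕ) (h1 : 0 < i) (h2 : u.t (i-1) = false)
    (h3 : u.sep i = []) : u.adj i := Or.inl ⟨h1, h2, h3⟩

lemma getLastD_mem : ∀ (l : List ℕ) (d : ℕ), l ≠ [] → l.getLastD d ∈ l := by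
  intro l
  induction l with
  | nil => intro d h; exact absurd rfl h
  | cons x t ih =>
    intro d _
    cases t with
    | nil => simp
    | cons y t' =>
      rw [List.getLastD_cons]
      exact List.mem_cons_of_mem x (ih x (by simp))

lemma sep_hasTwo_of_vleft (u : UTilde) (i : ℕ) (h1 : i < u.m) (h2 : u.t i = false)
    (h3 : u.sep i ≠ []) : ∃ x ∈ u.sep i, 2 ≤ x := by
  have := u.v_left i h1 h2 h3
  exact ⟨(u.sep i).getLastD 0, getLastD_mem _ 0 h3, this⟩

lemma sep_head_two_of_vright (u : UTilde) (i : ℕ) (h1 : i < u.m) (h2 : u.t i = false)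
    (h3 : u.sep (i+1) ≠ []) : ∃ y l, u.sep (i+1) = y :: l ∧ 2 ≤ y := by
  have := u.v_right i h1 h2 h3
  obtain ⟨y, l, hyl⟩ := List.exists_cons_of_ne_nil h3
  refine ⟨y, l, hyl, ?_⟩
  rwa [hyl, List.headD_cons] at this

/-! ### chunks forms of `blocks` -/

lemma blocks_eq_chunks (u : UTilde) (f : ℕ → List ℕ) :
    u.blocks f = u.sep 0 ++ chunks u.m (fun k => f k ++ u.sep (k+1)) := by
  rw [UTilde.blocks]
  congr 1
  exact GKAux.chunks_eq_ofFn u.m (fun k => f k ++ u.sep (k+1))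

lemma chunks_ext_eq (u : UTilde) (q : ℕ → List ℕ) :
    chunks (u.m + 1) (fun k => (if k = 0 then [] else q (k-1)) ++ u.sep k) =
      u.sep 0 ++ chunks u.m (fun k => q k ++ u.sep (k+1)) := by
  simp only [GKAux.chunks]
  simp only [if_true, List.nil_append]
  exact congrArg (u.sep 0 ++ ·) (GKAux.chunks_congr _ _ _ (fun i _ => by simp))

lemma lam_eq_chunks (u : UTilde) (c : ℕ → ℕ) :
    u.lam c = chunks (u.m + 1) (fun k => spB u c k ++ u.sep k) := by
  have h0 : u.lam c = u.blocks (slotB u c) := rfl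
  rw [h0, blocks_eq_chunks, ← chunks_ext_eq u (slotB u c)]
  rfl

lemma tn_eq_chunks (u : UTilde) (n : ℕ) :
    u.tn n = chunks (u.m + 1)
      (fun k => (if k = 0 then [] else if u.t (k-1) then [n] else List.replicate n 1)
        ++ u.sep k) := by
  have h0 : u.tn n = u.blocks (fun k => if u.t k then [n] else List.replicate n 1) := rfl
  rw [h0, blocks_eq_chunks,
    ← chunks_ext_eq u (fun k => if u.t k then [n] else List.replicate n 1)]

lemma toksU_eq (u : UTilde) :
    toksU u = tokF (u.sep 0) ++ chunks u.m (gT u) := by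
  rw [toksU]
  simp only [GKAux.chunks]
  rw [show gTe u 0 = tokF (u.sep 0) by rw [gTe, spT]; simp]
  exact congrArg (tokF (u.sep 0) ++ ·) (GKAux.chunks_congr _ _ _
    (fun i _ => by rw [gTe, spT, if_neg (by omega), gT]; simp))

lemma Ctail_zero_helper (u : UTilde) (i : ℕ) (h : i = u.m) : Ctail u i = [] := by
  rw [Ctail, h, Nat.sub_self]
  rfl

lemma Ctail_succ (u : UTilde) (i : ℕ) (h : i < u.m) :
    Ctail u i = slotT u i ++ (tokF (u.sep (i+1)) ++ Ctail u (i+1)) := by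
  rw [Ctail, Ctail]
  have h1 : u.m - i = (u.m - (i+1)) + 1 := by omega
  rw [h1, GKAux.chunks]
  have h2 : (fun t => gT u (i + (t+1))) = fun t => gT u (i + 1 + t) := by
    funext t; congr 1; omega
  rw [h2]
  simp only [Nat.add_zero, gT, List.append_assoc]

/-! ### Parses bridges -/

lemma parses_tokF' (s : List ℕ) : Parses (tokF s) s := GKAux.parses_tokF s

lemma parses_slot (u : UTilde) (c : ℕ → ℕ) (k : ℕ) :
    Parses (slotT u k) (slotB u c k) := by
  rw [slotT, slotB]
  by_cases h : u.t k
  · rw [if_pos h, if_pos h]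
    exact ⟨c k, [], rfl, rfl⟩
  · rw [if_neg h, if_neg h]
    exact ⟨c k, [], by simp, rfl⟩

lemma parses_sp (u : UTilde) (c : ℕ → ℕ) (k : ℕ) :
    Parses (spT u k) (spB u c k) := by
  rw [spT, spB]
  by_cases h : k = 0
  · rw [if_pos h, if_pos h]; rfl
  · rw [if_neg h, if_neg h]; exact parses_slot u c (k-1)

lemma parses_toksU (u : UTilde) (c : ℕ → ℕ) : Parses (toksU u) (u.lam c) := by
  rw [toksU, lam_eq_chunks]
  apply GKAux.parses_chunks
  intro k _
  exact GKAux.parses_append (parses_sp u c k) (parses_tokF' (u.sep k))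

end GK
namespace GK

open GKAux (chunks Tok Parses Hd2x Safe WF VOK)

lemma safe_slot_cons (u : UTilde) (i : ℕ) (hi : u.t i = true) (T : List Tok)
    (h : 2 ≤ u.d i ∨ Safe T) : Safe (slotT u i ++ T) := by
  rw [slotT, if_pos hi]
  exact h

lemma vok_tokF_nil (s : List ℕ) : VOK (tokF s) := by
  have := GKAux.vok_tokF s [] trivial
  simpa [tokF] using this

/-- key downward induction: safety of the tail starting at the separating composition
`sep i`, provided `i` is not a v-interval with empty `sep i`. -/
lemma safeMid (u : UTilde) : ∀ k i, i + k = u.m →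
    ¬(i < u.m ∧ u.t i = false ∧ u.sep i = []) →
    Safe (tokF (u.sep i) ++ Ctail u i) := by
  intro k
  induction k with
  | zero =>
    intro i hi _
    rw [Ctail_zero_helper u i (by omega)]
    exact GKAux.safe_tokF_of_safe _ _ trivial
  | succ k ih =>
    intro i hi hbad
    have him : i < u.m := by omega
    rw [Ctail_succ u i him]
    by_cases ht : u.t i
    · apply GKAux.safe_tokF_of_safe
      apply safe_slot_cons u i ht
      by_cases hadj : u.adj i
      · exact Or.inl (by rw [d_eq_two_of_adj u i hadj])
      · refine Or.inr (ih (i+1) (by omega) ?_)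
        intro ⟨hb1, hb2, hb3⟩
        exact hadj (adj_of_right u i hb1 hb2 hb3)
    · have hne : u.sep i ≠ [] := by
        intro hcon
        exact hbad ⟨him, by simpa using ht, hcon⟩
      exact GKAux.safe_tokF_of_mem _ _ (sep_hasTwo_of_vleft u i him (by simpa using ht) hne)

lemma wfTail (u : UTilde) : ∀ k i, i + k = u.m → WF (tokF (u.sep i) ++ Ctail u i) := by
  intro k
  induction k with
  | zero =>
    intro i hi
    rw [Ctail_zero_helper u i (by omega)]
    exact GKAux.wf_tokF _ _ trivial
  | succ k ih =>
    intro i hi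
    have him : i < u.m := by omega
    rw [Ctail_succ u i him]
    apply GKAux.wf_tokF
    by_cases ht : u.t i
    · rw [slotT, if_pos ht]
      refine ⟨fun hd1 => ?_, ih (i+1) (by omega)⟩
      -- d i ≤ 1 so d i = 1, so not adjacent
      have hadj : ¬ u.adj i := by
        intro hadj
        have := d_eq_two_of_adj u i hadj
        omega
      refine safeMid u k (i+1) (by omega) ?_
      intro ⟨hb1, hb2, hb3⟩
      exact hadj (adj_of_right u i hb1 hb2 hb3)
    · rw [slotT, if_neg ht]
      exact ih (i+1) (by omega)

/-- `VOK` for the prefix part, for `j = jj+1`: tokens from slot `i` to slot `jj`,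
followed by the map of `s₁` (initial segment of `sep (jj+1)` before the designated 1). -/
lemma vokPart (u : UTilde) (jj : ℕ) (hjj : jj < u.m) (s₁ s₂ : List ℕ)
    (hsep : u.sep (jj+1) = s₁ ++ 1 :: s₂) :
    ∀ k i, i + k = jj →
    VOK (chunks k (fun t => gT u (i + t)) ++ (slotT u jj ++ tokF s₁)) := by
  intro k
  induction k with
  | zero =>
    intro i hi
    rw [show chunks 0 (fun t => gT u (i + t)) = [] from rfl, List.nil_append]
    by_cases ht : u.t jj
    · rw [slotT, if_pos ht]
      exact vok_tokF_nil s₁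
    · rw [slotT, if_neg ht]
      refine ⟨?_, vok_tokF_nil s₁⟩
      -- Hd2x (tokF s₁) : s₁ starts with ≥ 2 by v_right
      obtain ⟨y, l, hyl, hy2⟩ := sep_head_two_of_vright u jj hjj (by simpa using ht)
        (by rw [hsep]; simp)
      rw [hsep] at hyl
      cases s₁ with
      | nil =>
        simp only [List.nil_append, List.cons_eq_cons] at hyl
        omega
      | cons a s₁' =>
        have ha : a = y := by
          rw [List.cons_append, List.cons_eq_cons] at hyl
          exact hyl.1
        subst ha
        exact hy2
  | succ k ih =>
    intro i hi
    simp only [GKAux.chunks]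
    have hshift : (fun t => gT u (i + (t + 1))) = fun t => gT u ((i+1) + t) := by
      funext t; congr 1; omega
    rw [hshift, Nat.add_zero, gT]
    simp only [List.append_assoc]
    have hrest := ih (i+1) (by omega)
    by_cases ht : u.t i
    · rw [slotT, if_pos ht]
      exact GKAux.vok_tokF _ _ hrest
    · rw [slotT, if_neg ht]
      refine ⟨?_, GKAux.vok_tokF _ _ hrest⟩
      -- Hd2x of what follows the V
      cases hsi : u.sep (i+1) with
      | cons y l =>
        have h2 := u.v_right i (by omega) (by simpa using ht) (by rw [hsi]; simp)
        rw [hsi, List.headD_cons] at h2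
        exact h2
      | nil =>
        simp only [tokF, List.map_nil, List.nil_append]
        cases k with
        | zero =>
          have hij : i + 1 = jj := by omega
          simp only [GKAux.chunks, List.nil_append]
          have htj : u.t jj = true := by
            by_contra hcon
            have := u.vv i (by omega) (by simpa using ht)
              (by rw [hij]; simpa using hcon)
            exact this hsi
          rw [slotT, if_pos htj]
          show 2 ≤ u.d jj
          have hadj : u.adj jj := by
            apply adj_of_left u jj (by omega)
            · rw [show jj - 1 = i by omega]; simpa using ht
            · rw [← hij]; exact hsi
          rw [d_eq_two_of_adj u jj hadj]
        | succ k' =>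
          simp only [GKAux.chunks, List.append_assoc]
          have htj : u.t (i+1) = true := by
            by_contra hcon
            have := u.vv i (by omega) (by simpa using ht) (by simpa using hcon)
            exact this hsi
          rw [Nat.add_zero, gT, slotT, if_pos htj]
          simp only [List.append_assoc]
          show 2 ≤ u.d (i+1)
          have hadj : u.adj (i+1) := by
            apply adj_of_left u (i+1) (by omega)
            · simpa using ht
            · exact hsi
          rw [d_eq_two_of_adj u (i+1) hadj]

end GK
namespace GK

open GKAux (chunks Tok Parses Hd2x Safe WF VOK)

def cMod (c : ℕ → ℕ) (i₀ : ℕ) : ℕ → ℕ := fun i => if i = i₀ then c i₀ + 1 else c i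

def sepMod (u : UTilde) (j : ℕ) (s₁ s₂ : List ℕ) : ℕ → List ℕ :=
  fun i => if i = j then s₁ ++ s₂ else u.sep i

/-- the modified composition: one `1` removed from `sep j`, one `1` added to
the v-interval `i₀`. -/
def muP (u : UTilde) (c : ℕ → ℕ) (i₀ j : ℕ) (s₁ s₂ : List ℕ) : List ℕ :=
  chunks (u.m+1) (fun k => spB u (cMod c i₀) k ++ sepMod u j s₁ s₂ k)

/-- the intermediate composition: one `1` removed from `sep j`, `c` unchanged. -/
def nuP (u : UTilde) (c : ℕ → ℕ) (j : ℕ) (s₁ s₂ : List ℕ) : List ℕ :=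
  chunks (u.m+1) (fun k => spB u c k ++ sepMod u j s₁ s₂ k)

lemma lam_perm_nuP (u : UTilde) (c : ℕ → ℕ) {j : ℕ} (hjm : j ≤ u.m)
    {s₁ s₂ : List ℕ} (hsep : u.sep j = s₁ ++ 1 :: s₂) :
    (u.lam c).Perm (1 :: nuP u c j s₁ s₂) := by
  have hsplit := GKAux.chunks_split (u.m+1) j (by omega)
    (fun k => spB u c k ++ u.sep k)
  have hsplit' := GKAux.chunks_split (u.m+1) j (by omega)
    (fun k => spB u c k ++ sepMod u j s₁ s₂ k)
  have hc1 : chunks j (fun k => spB u c k ++ sepMod u j s₁ s₂ k) =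
      chunks j (fun k => spB u c k ++ u.sep k) := by
    apply GKAux.chunks_congr
    intro i hij
    rw [sepMod, if_neg (by omega)]
  have hc2 : chunks (u.m + 1 - j - 1) (fun k => spB u c (j+1+k) ++ sepMod u j s₁ s₂ (j+1+k)) =
      chunks (u.m + 1 - j - 1) (fun k => spB u c (j+1+k) ++ u.sep (j+1+k)) := by
    apply GKAux.chunks_congr
    intro i hij
    rw [sepMod, if_neg (by omega)]
  rw [lam_eq_chunks, hsplit, nuP, hsplit', hc1, hc2, sepMod, if_pos rfl, hsep]
  have e1 : chunks j (fun k => spB u c k ++ u.sep k) ++ (spB u c j ++ (s₁ ++ 1 :: s₂)) ++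
      chunks (u.m + 1 - j - 1) (fun k => spB u c (j+1+k) ++ u.sep (j+1+k)) =
      (chunks j (fun k => spB u c k ++ u.sep k) ++ spB u c j ++ s₁) ++ 1 ::
      (s₂ ++ chunks (u.m + 1 - j - 1) (fun k => spB u c (j+1+k) ++ u.sep (j+1+k))) := by
    simp [List.append_assoc]
  rw [e1]
  have e2 : chunks j (fun k => spB u c k ++ u.sep k) ++ (spB u c j ++ (s₁ ++ s₂)) ++
      chunks (u.m + 1 - j - 1) (fun k => spB u c (j+1+k) ++ u.sep (j+1+k)) =
      (chunks j (fun k => spB u c k ++ u.sep k) ++ spB u c j ++ s₁) ++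
      (s₂ ++ chunks (u.m + 1 - j - 1) (fun k => spB u c (j+1+k) ++ u.sep (j+1+k))) := by
    simp [List.append_assoc]
  rw [e2]
  exact List.perm_middle

lemma muP_perm_nuP (u : UTilde) (c : ℕ → ℕ) {i₀ j : ℕ} (hi₀ : i₀ < u.m)
    (ht₀ : u.t i₀ = false) (s₁ s₂ : List ℕ) :
    (muP u c i₀ j s₁ s₂).Perm (1 :: nuP u c j s₁ s₂) := by
  set sp := sepMod u j s₁ s₂ with hsp
  have hsplit := GKAux.chunks_split (u.m+1) (i₀+1) (by omega)
    (fun k => spB u (cMod c i₀) k ++ sp k)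
  have hsplit' := GKAux.chunks_split (u.m+1) (i₀+1) (by omega)
    (fun k => spB u c k ++ sp k)
  have hc1 : chunks (i₀+1) (fun k => spB u (cMod c i₀) k ++ sp k) =
      chunks (i₀+1) (fun k => spB u c k ++ sp k) := by
    apply GKAux.chunks_congr
    intro i hij
    congr 1
    rw [spB, spB]
    by_cases h0 : i = 0
    · rw [if_pos h0, if_pos h0]
    · rw [if_neg h0, if_neg h0, slotB, slotB, cMod]
      have : ¬ (i - 1 = i₀) := by omega
      rw [if_neg this]
  have hc2 : chunks (u.m + 1 - (i₀+1) - 1)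
        (fun k => spB u (cMod c i₀) (i₀+1+1+k) ++ sp (i₀+1+1+k)) =
      chunks (u.m + 1 - (i₀+1) - 1) (fun k => spB u c (i₀+1+1+k) ++ sp (i₀+1+1+k)) := by
    apply GKAux.chunks_congr
    intro i hij
    congr 1
    rw [spB, spB, if_neg (by omega), if_neg (by omega), slotB, slotB, cMod]
    have : ¬ (i₀ + 1 + 1 + i - 1 = i₀) := by omega
    rw [if_neg this]
  have hb1 : spB u (cMod c i₀) (i₀+1) = List.replicate (c i₀ + 1) 1 := by
    rw [spB, if_neg (by omega), slotB, if_neg (by simp [ht₀]),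
      Nat.add_sub_cancel, cMod]
    simp
  have hb2 : spB u c (i₀+1) = List.replicate (c i₀) 1 := by
    rw [spB, if_neg (by omega), slotB, if_neg (by simp [ht₀]), Nat.add_sub_cancel]
  rw [muP, ← hsp, hsplit, nuP, ← hsp, hsplit', hc1, hc2, hb1, hb2, List.replicate_succ]
  have e1 : chunks (i₀+1) (fun k => spB u c k ++ sp k) ++
      ((1 :: List.replicate (c i₀) 1) ++ sp (i₀+1)) ++
      chunks (u.m + 1 - (i₀+1) - 1) (fun k => spB u c (i₀+1+1+k) ++ sp (i₀+1+1+k)) =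
      chunks (i₀+1) (fun k => spB u c k ++ sp k) ++ 1 ::
      (List.replicate (c i₀) 1 ++ sp (i₀+1) ++
        chunks (u.m + 1 - (i₀+1) - 1) (fun k => spB u c (i₀+1+1+k) ++ sp (i₀+1+1+k))) := by
    simp [List.append_assoc]
  rw [e1]
  have e2 : chunks (i₀+1) (fun k => spB u c k ++ sp k) ++
      (List.replicate (c i₀) 1 ++ sp (i₀+1)) ++
      chunks (u.m + 1 - (i₀+1) - 1) (fun k => spB u c (i₀+1+1+k) ++ sp (i₀+1+1+k)) =
      chunks (i₀+1) (fun k => spB u c k ++ sp k) ++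
      (List.replicate (c i₀) 1 ++ sp (i₀+1) ++
        chunks (u.m + 1 - (i₀+1) - 1) (fun k => spB u c (i₀+1+1+k) ++ sp (i₀+1+1+k))) := by
    simp [List.append_assoc]
  rw [e2]
  exact List.perm_middle

lemma muP_perm_lam (u : UTilde) (c : ℕ → ℕ) {i₀ j : ℕ} (hi₀ : i₀ < u.m)
    (ht₀ : u.t i₀ = false) (hjm : j ≤ u.m) {s₁ s₂ : List ℕ}
    (hsep : u.sep j = s₁ ++ 1 :: s₂) :
    (muP u c i₀ j s₁ s₂).Perm (u.lam c) :=
  (muP_perm_nuP u c hi₀ ht₀ s₁ s₂).trans (lam_perm_nuP u c hjm hsep).symm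

end GK
namespace GK

open GKAux (chunks Tok Parses Hd2x Safe WF VOK)

def Stoks (u : UTilde) (j : ℕ) (s₁ : List ℕ) : List Tok :=
  chunks j (gTe u) ++ (spT u j ++ tokF s₁)

def Ctoks (u : UTilde) (j : ℕ) (s₂ : List ℕ) : List Tok := tokF s₂ ++ Ctail u j

lemma gTe_shift (u : UTilde) (j k : ℕ) : gTe u (j+1+k) = gT u (j+k) := by
  rw [gTe, spT, if_neg (by omega), gT]
  have h1 : j + 1 + k - 1 = j + k := by omega
  have h2 : j + 1 + k = j + k + 1 := by omega
  rw [h1, h2]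

lemma gTe_succ (u : UTilde) (i : ℕ) : gTe u (i+1) = gT u i := by
  rw [gTe, spT, if_neg (by omega), Nat.add_sub_cancel, gT]

lemma Ctail_eq_shift (u : UTilde) (j : ℕ) :
    Ctail u j = chunks (u.m - j) (fun k => gTe u (j+1+k)) := by
  rw [Ctail]
  exact (GKAux.chunks_congr _ _ _ (fun i _ => gTe_shift u j i)).symm

lemma toksU_split (u : UTilde) {j : ℕ} (hjm : j ≤ u.m) {s₁ s₂ : List ℕ}
    (hsep : u.sep j = s₁ ++ 1 :: s₂) :
    toksU u = Stoks u j s₁ ++ (Tok.F 1 :: Ctoks u j s₂) := by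
  rw [toksU, GKAux.chunks_split (u.m+1) j (by omega) (gTe u)]
  have hmj : u.m + 1 - j - 1 = u.m - j := by omega
  rw [hmj, ← Ctail_eq_shift u j]
  have hgj : gTe u j = spT u j ++ (tokF s₁ ++ (Tok.F 1 :: tokF s₂)) := by
    rw [gTe, hsep, tokF, List.map_append, List.map_cons, tokF, tokF]
  rw [hgj, Stoks, Ctoks]
  simp [List.append_assoc]

lemma parses_SC (u : UTilde) (c : ℕ → ℕ) {i₀ j : ℕ} (hjm : j ≤ u.m)
    {s₁ s₂ : List ℕ} (hsep : u.sep j = s₁ ++ 1 :: s₂) :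
    Parses (Stoks u j s₁ ++ Ctoks u j s₂) (muP u c i₀ j s₁ s₂) := by
  set c' := cMod c i₀ with hc'
  -- split muP at j
  have hsplit := GKAux.chunks_split (u.m+1) j (by omega)
    (fun k => spB u c' k ++ sepMod u j s₁ s₂ k)
  have hmj : u.m + 1 - j - 1 = u.m - j := by omega
  rw [hmj] at hsplit
  have hc1 : chunks j (fun k => spB u c' k ++ sepMod u j s₁ s₂ k) =
      chunks j (fun k => spB u c' k ++ u.sep k) :=
    GKAux.chunks_congr _ _ _ (fun i hij => by rw [sepMod, if_neg (by omega)])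
  have hc2 : chunks (u.m - j) (fun k => spB u c' (j+1+k) ++ sepMod u j s₁ s₂ (j+1+k)) =
      chunks (u.m - j) (fun k => spB u c' (j+1+k) ++ u.sep (j+1+k)) :=
    GKAux.chunks_congr _ _ _ (fun i hij => by rw [sepMod, if_neg (by omega)])
  have hmu : muP u c i₀ j s₁ s₂ =
      chunks j (fun k => spB u c' k ++ u.sep k) ++
      (spB u c' j ++ (s₁ ++ (s₂ ++
        chunks (u.m - j) (fun k => spB u c' (j+1+k) ++ u.sep (j+1+k))))) := by
    rw [muP, ← hc', hsplit, hc1, hc2, sepMod, if_pos rfl]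
    simp [List.append_assoc]
  have hS : Stoks u j s₁ ++ Ctoks u j s₂ =
      chunks j (gTe u) ++ (spT u j ++ (tokF s₁ ++ (tokF s₂ ++ Ctail u j))) := by
    rw [Stoks, Ctoks]
    simp [List.append_assoc]
  rw [hS, hmu]
  apply GKAux.parses_append
  · apply GKAux.parses_chunks
    intro k _
    rw [gTe]
    exact GKAux.parses_append (parses_sp u c' k) (parses_tokF' (u.sep k))
  apply GKAux.parses_append (parses_sp u c' j)
  apply GKAux.parses_append (parses_tokF' s₁)
  apply GKAux.parses_append (parses_tokF' s₂)
  rw [Ctail_eq_shift u j]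
  apply GKAux.parses_chunks
  intro k _
  rw [gTe_shift u j k, gT]
  have h1 : Parses (slotT u (j+k)) (spB u c' (j+1+k)) := by
    rw [spB, if_neg (by omega)]
    have : j + 1 + k - 1 = j + k := by omega
    rw [this]
    exact parses_slot u c' (j+k)
  have h2 : Parses (tokF (u.sep (j+k+1))) (u.sep (j+1+k)) := by
    have : j + 1 + k = j + k + 1 := by omega
    rw [this]
    exact parses_tokF' _
  exact GKAux.parses_append h1 h2

lemma vok_Stoks (u : UTilde) {j : ℕ} (hjm : j ≤ u.m) {s₁ s₂ : List ℕ}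
    (hsep : u.sep j = s₁ ++ 1 :: s₂) : VOK (Stoks u j s₁) := by
  rw [Stoks]
  cases j with
  | zero =>
    rw [show chunks 0 (gTe u) = [] from rfl, List.nil_append, spT, if_pos rfl,
      List.nil_append]
    exact vok_tokF_nil s₁
  | succ jj =>
    have hjj : jj < u.m := by omega
    rw [spT, if_neg (by omega), Nat.add_sub_cancel]
    have hvp := vokPart u jj hjj s₁ s₂ hsep jj 0 (by omega)
    rw [show (fun t => gT u (0 + t)) = gT u from funext fun t => by rw [Nat.zero_add]] at hvp
    have hch : chunks (jj+1) (gTe u) = tokF (u.sep 0) ++ chunks jj (gT u) := by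
      simp only [GKAux.chunks]
      rw [show gTe u 0 = tokF (u.sep 0) by rw [gTe, spT, if_pos rfl, List.nil_append]]
      exact congrArg (tokF (u.sep 0) ++ ·) (GKAux.chunks_congr _ _ _ (fun i _ => gTe_succ u i))
    rw [hch, List.append_assoc]
    exact GKAux.vok_tokF _ _ hvp

lemma wf_tokF_inv : ∀ (s : List ℕ) (T : List Tok), WF (tokF s ++ T) → WF T := by
  intro s
  induction s with
  | nil => intro T h; exact h
  | cons x t ih => intro T h; exact ih T h

lemma wf_Ctoks (u : UTilde) {j : ℕ} (hjm : j ≤ u.m) (s₂ : List ℕ) :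
    WF (Ctoks u j s₂) := by
  rw [Ctoks]
  apply GKAux.wf_tokF
  exact wf_tokF_inv (u.sep j) _ (wfTail u (u.m - j) j (by omega))

lemma getLastD_two_mem : ∀ (s₁ : List ℕ) (s₂ : List ℕ) (d : ℕ),
    2 ≤ (s₁ ++ 1 :: s₂).getLastD d → ∃ x ∈ s₂, 2 ≤ x := by
  intro s₁
  induction s₁ with
  | nil =>
    intro s₂ d h
    rw [List.nil_append, List.getLastD_cons] at h
    cases s₂ with
    | nil => simp [List.getLastD] at h
    | cons y l => exact ⟨(y::l).getLastD 1, getLastD_mem _ _ (by simp), h⟩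
  | cons x t ih =>
    intro s₂ d h
    rw [List.cons_append, List.getLastD_cons] at h
    exact ih s₂ x h

lemma safe_Ctoks (u : UTilde) {j : ℕ} (hjm : j ≤ u.m) {s₁ s₂ : List ℕ}
    (hsep : u.sep j = s₁ ++ 1 :: s₂) : Safe (Ctoks u j s₂) := by
  rw [Ctoks]
  by_cases hmem : ∃ x ∈ s₂, 2 ≤ x
  · exact GKAux.safe_tokF_of_mem _ _ hmem
  apply GKAux.safe_tokF_of_safe
  rcases Nat.lt_or_ge j u.m with hjlt | hje
  · rw [Ctail_succ u j hjlt]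
    by_cases ht : u.t j
    · apply safe_slot_cons u j ht
      by_cases hadj : u.adj j
      · exact Or.inl (by rw [d_eq_two_of_adj u j hadj])
      · refine Or.inr (safeMid u (u.m - (j+1)) (j+1) (by omega) ?_)
        intro ⟨hb1, hb2, hb3⟩
        exact hadj (adj_of_right u j hb1 hb2 hb3)
    · -- v-interval at j : sep j ends with ≥ 2, which must lie in s₂, contradiction
      exfalso
      have hlast := u.v_left j hjlt (by simpa using ht) (by rw [hsep]; simp)
      rw [hsep] at hlast
      exact hmem (getLastD_two_mem s₁ s₂ 0 hlast)
  · rw [Ctail_zero_helper u j (by omega)]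
    trivial

lemma muP_not_lam (u : UTilde) (c : ℕ → ℕ) {i₀ j : ℕ} (hjm : j ≤ u.m)
    {s₁ s₂ : List ℕ} (hsep : u.sep j = s₁ ++ 1 :: s₂) :
    ¬ ∃ cc : ℕ → ℕ, muP u c i₀ j s₁ s₂ = u.lam cc := by
  rintro ⟨cc, hcc⟩
  have h1 : Parses (toksU u) (muP u c i₀ j s₁ s₂) := by
    rw [hcc]; exact parses_toksU u cc
  rw [toksU_split u hjm hsep] at h1
  exact GKAux.noparse _ _ _ (vok_Stoks u hjm hsep) (wf_Ctoks u hjm s₂)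
    (safe_Ctoks u hjm hsep) h1 (parses_SC u c hjm hsep)

end GK
namespace GK

open GKAux (chunks Tok Parses Hd2x Safe WF VOK)

lemma gkmem_muP (u : UTilde) (c : ℕ → ℕ) {i₀ j : ℕ} (hi₀ : i₀ < u.m)
    (hjm : j ≤ u.m) {s₁ s₂ : List ℕ} (hsep : u.sep j = s₁ ++ 1 :: s₂) :
    u.GKmem (muP u c i₀ j s₁ s₂) := by
  set c' := cMod c i₀ with hc'
  set n := (∑ k ∈ Finset.range u.m, (u.d k + c k + 1)) + 1 with hn
  have hbound : ∀ k, k < u.m → u.d k + c k + 1 ≤ n := by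
    intro k hk
    have h0 := Finset.single_le_sum (f := fun k => u.d k + c k + 1)
      (fun i _ => Nat.zero_le _) (Finset.mem_range.mpr hk)
    have h2 : u.d k + c k + 1 ≤ ∑ k ∈ Finset.range u.m, (u.d k + c k + 1) := h0
    omega
  have hc'le : ∀ k, k < u.m → u.d k + c' k ≤ n ∧ c' k ≤ n := by
    intro k hk
    have h1 := hbound k hk
    have h2 : c' k ≤ c k + 1 := by
      rw [hc', cMod]
      by_cases hki : k = i₀
      · rw [if_pos hki, hki]
      · rw [if_neg hki]; omega
    constructor <;> omega
  refine ⟨n, by omega, ?_⟩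
  set σ := chunks (u.m+1)
    (fun k => (if k = 0 then [] else if u.t (k-1) then [n] else List.replicate (c' (k-1)) 1)
      ++ sepMod u j s₁ s₂ k) with hσ
  have hsub : σ.Sublist (u.tn n) := by
    rw [tn_eq_chunks, hσ]
    apply GKAux.sublist_chunks
    intro k hk
    apply List.Sublist.append
    · by_cases h0 : k = 0
      · rw [if_pos h0, if_pos h0]
      · rw [if_neg h0, if_neg h0]
        by_cases ht : u.t (k-1)
        · rw [if_pos ht, if_pos ht]
        · rw [if_neg ht, if_neg ht]
          exact (List.replicate_sublist_replicate (1:ℕ)).mpr (hc'le (k-1) (by omega)).2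
    · rw [sepMod]
      by_cases hkj : k = j
      · rw [if_pos hkj, hkj, hsep]
        exact (List.sublist_cons_self 1 s₂).append_left s₁
      · rw [if_neg hkj]
  have hfa : List.Forall₂ (· ≤ ·) (muP u c i₀ j s₁ s₂) σ := by
    rw [muP, hσ, ← hc']
    apply GKAux.forall₂_chunks
    intro k hk
    apply List.rel_append
    · rw [spB]
      by_cases h0 : k = 0
      · rw [if_pos h0, if_pos h0]
        exact List.Forall₂.nil
      · rw [if_neg h0, if_neg h0, slotB]
        by_cases ht : u.t (k-1)
        · rw [if_pos ht, if_pos ht]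
          exact List.Forall₂.cons (hc'le (k-1) (by omega)).1 List.Forall₂.nil
        · rw [if_neg ht, if_neg ht]
          exact List.forall₂_same.mpr (fun x _ => le_rfl)
    · exact List.forall₂_same.mpr (fun x _ => le_rfl)
  have hposμ : ∀ x ∈ muP u c i₀ j s₁ s₂, 1 ≤ x := by
    intro x hx
    rw [muP, ← hc'] at hx
    obtain ⟨k, hk, hmem⟩ := GKAux.mem_chunks _ _ _ hx
    rcases List.mem_append.mp hmem with h | h
    · rw [spB] at h
      by_cases h0 : k = 0
      · rw [if_pos h0] at h
        exact absurd h List.not_mem_nil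
      · rw [if_neg h0, slotB] at h
        by_cases ht : u.t (k-1)
        · rw [if_pos ht] at h
          have hx2 := List.mem_singleton.mp h
          have := d_pos u (k-1)
          omega
        · rw [if_neg ht] at h
          rw [List.eq_of_mem_replicate h]
    · rw [sepMod] at h
      by_cases hkj : k = j
      · rw [if_pos hkj] at h
        have hmem2 : x ∈ u.sep j := by
          rw [hsep]
          rcases List.mem_append.mp h with h' | h'
          · exact List.mem_append_left _ h'
          · exact List.mem_append_right _ (List.mem_cons_of_mem 1 h')
        exact u.sep_pos j hjm x hmem2
      · rw [if_neg hkj] at h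
        exact u.sep_pos k (by omega) x h
  have hpostn : ∀ x ∈ u.tn n, 1 ≤ x := by
    intro x hx
    rw [tn_eq_chunks] at hx
    obtain ⟨k, hk, hmem⟩ := GKAux.mem_chunks _ _ _ hx
    rcases List.mem_append.mp hmem with h | h
    · by_cases h0 : k = 0
      · rw [if_pos h0] at h
        exact absurd h List.not_mem_nil
      · rw [if_neg h0] at h
        by_cases ht : u.t (k-1)
        · rw [if_pos ht] at h
          rw [List.mem_singleton.mp h]
          omega
        · rw [if_neg ht] at h
          rw [List.eq_of_mem_replicate h]
    · exact u.sep_pos k (by omega) x h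
  exact rtg_of_sublist hsub hfa hposμ hpostn

lemma exists_top_perm (u : UTilde) {i₀ j : ℕ} (hi₀ : i₀ < u.m) (ht₀ : u.t i₀ = false)
    (hjm : j ≤ u.m) {s₁ s₂ : List ℕ} (hsep : u.sep j = s₁ ++ 1 :: s₂) (c : ℕ → ℕ) :
    ∃ v : List ℕ, v.Perm (u.lam c) ∧ u.phi v = ⊤ := by
  refine ⟨muP u c i₀ j s₁ s₂, muP_perm_lam u c hi₀ ht₀ hjm hsep, ?_⟩
  have hno := muP_not_lam u c (i₀ := i₀) hjm hsep
  have hgk := gkmem_muP u c hi₀ hjm hsep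
  unfold UTilde.phi
  rw [dif_neg hno, if_pos hgk]

end GK
namespace GK

/-- if `ũ` has a v-interval and some separating composition has a part equal
to 1, then for every partition `λ` the sum of `φ_ũ` over all distinct compositions obtained
by permuting the parts of `λ` is `0` or `+∞`. -/
theorem symmetrization_zero_or_top (u : UTilde)
    (hv : ∃ i, i < u.m ∧ u.t i = false)
    (h1 : ∃ i, i ≤ u.m ∧ (1 : ℕ) ∈ u.sep i) :
    ∀ l : List ℕ, (∀ n ∈ l, 0 < n) → l.Pairwise (· ≥ ·) →
      (∑' μ : {x : List ℕ // x.Perm l}, u.phi μ.1) = 0 ∨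
      (∑' μ : {x : List ℕ // x.Perm l}, u.phi μ.1) = ⊤ := by
  intro l _ _
  by_cases hz : ∀ μ : {x : List ℕ // x.Perm l}, u.phi μ.1 = 0
  · left
    rw [ENNReal.tsum_eq_zero]
    exact hz
  · right
    push_neg at hz
    obtain ⟨μ₀, hμ₀⟩ := hz
    have htop : ∃ v : List ℕ, v.Perm l ∧ u.phi v = ⊤ := by
      by_cases hex : ∃ cc : ℕ → ℕ, μ₀.1 = u.lam cc
      · obtain ⟨cc, hcc⟩ := hex
        obtain ⟨i₀, hi₀, ht₀⟩ := hv
        obtain ⟨j, hjm, hmem⟩ := h1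
        obtain ⟨s₁, s₂, hsep⟩ := List.append_of_mem hmem
        obtain ⟨v, hperm, hvtop⟩ := exists_top_perm u hi₀ ht₀ hjm hsep cc
        have hlam_l : (u.lam cc).Perm l := hcc ▸ μ₀.2
        exact ⟨v, hperm.trans hlam_l, hvtop⟩
      · refine ⟨μ₀.1, μ₀.2, ?_⟩
        unfold UTilde.phi at hμ₀ ⊢
        rw [dif_neg hex] at hμ₀ ⊢
        by_cases hgk : u.GKmem μ₀.1
        · rw [if_pos hgk]
        · rw [if_neg hgk] at hμ₀
          exact absurd rfl hμ₀
    obtain ⟨v, hvp, hvtop⟩ := htop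
    have hle := ENNReal.le_tsum (f := fun μ : {x : List ℕ // x.Perm l} => u.phi μ.1) ⟨v, hvp⟩
    rw [hvtop] at hle
    exact top_le_iff.mp hle

end GK
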